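/- Let (p_k, q_k), k = 1, ..., n, be pairs of coprime integers with p_k, q_k > 1. Define the semigroups H_k = N*q_1*...*q_k + N*p_1*q_2*...*q_k + N*p_2*q_3*...*q_k + ... + N*p_{k-1}*q_k + N*p_k. Define m_1 = p_1*q_1 and m_k = q_k*m_{k-1} + p_k*(q_k - 1). If every integer a > m_{k-1} lies in H_{k-1}, then every integer a > m_k lies in H_k. -/

import Mathlib

/-- The generators of the semigroup `H_k` of the paper:
`q_1⋯q_k` together with `p_i * q_{i+1}⋯q_k` for `1 ≤ i ≤ k`. -/
def gensH (p q : ℕ → ℕ) (k : ℕ) : Set ℕ :=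
  {∏ i ∈ Finset.Icc 1 k, q i} ∪
    {x | ∃ i ∈ Finset.Icc 1 k, x = p i * ∏ j ∈ Finset.Icc (i + 1) k, q j}

lemma pk_mem (p q : ℕ → ℕ) (k : ℕ) (hk : 1 ≤ k) : p k ∈ gensH p q k := by
  right
  refine ⟨k, Finset.mem_Icc.2 ⟨hk, le_rfl⟩, ?_⟩
  rw [Finset.Icc_eq_empty (by omega)]
  simp

lemma mul_mem_cl (p q : ℕ → ℕ) (k : ℕ) (hk : 1 ≤ k) (x : ℕ)
    (hx : x ∈ AddSubmonoid.closure (gensH p q (k - 1))) :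
    q k * x ∈ AddSubmonoid.closure (gensH p q k) := by
  induction hx using AddSubmonoid.closure_induction with
  | mem s hs =>
    apply AddSubmonoid.subset_closure
    rcases hs with h | ⟨i, hi, rfl⟩
    · left
      simp only [Set.mem_singleton_iff] at h ⊢
      subst h
      have : Finset.Icc 1 k = insert k (Finset.Icc 1 (k - 1)) := by
        ext x; simp [Finset.mem_Icc]; omega
      rw [this, Finset.prod_insert (by simp [Finset.mem_Icc]; omega)]
    · right
      rw [Finset.mem_Icc] at hi
      refine ⟨i, Finset.mem_Icc.2 ⟨hi.1, by omega⟩, ?_⟩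
      have : Finset.Icc (i + 1) k = insert k (Finset.Icc (i + 1) (k - 1)) := by
        ext x; simp [Finset.mem_Icc]; omega
      rw [this, Finset.prod_insert (by simp [Finset.mem_Icc]; omega)]
      ring
  | zero => exact zero_mem _
  | add a b _ _ ha hb =>
    rw [Nat.mul_add]
    exact AddSubmonoid.add_mem _ ha hb

theorem stmt_7 (p q : ℕ → ℕ) (hp : ∀ i, 1 < p i) (hq : ∀ i, 1 < q i)
    (hcop : ∀ i, Nat.Coprime (p i) (q i)) (k : ℕ) (hk : 2 ≤ k)
    (m : ℕ → ℕ) (hm1 : m 1 = p 1 * q 1)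
    (hm : ∀ j, 2 ≤ j → m j = q j * m (j - 1) + p j * (q j - 1))
    (ih : ∀ a : ℕ, m (k - 1) < a → a ∈ AddSubmonoid.closure (gensH p q (k - 1))) :
    ∀ a : ℕ, m k < a → a ∈ AddSubmonoid.closure (gensH p q k) := by
  intro a ha
  have hqk := hq k
  have hpk := hp k
  haveI : NeZero (q k) := ⟨by omega⟩
  set c : ℕ := ((a : ZMod (q k)) * ((p k : ZMod (q k)))⁻¹).val with hc
  have hclt : c < q k := ZMod.val_lt _
  have hcast : ((c * p k : ℕ) : ZMod (q k)) = (a : ZMod (q k)) := by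
    push_cast [hc, ZMod.natCast_val, ZMod.cast_id]
    rw [mul_assoc, mul_comm ((p k : ZMod (q k)))⁻¹, ZMod.coe_mul_inv_eq_one _ (hcop k), mul_one]
  -- c * p k ≤ m k < a
  have hcple : c * p k ≤ p k * (q k - 1) := by
    rw [mul_comm]; exact Nat.mul_le_mul_left _ (by omega)
  have hmk := hm k hk
  have hle : c * p k < a := by omega
  have hdvd : q k ∣ a - c * p k := by
    have : ((a - c * p k : ℕ) : ZMod (q k)) = 0 := by
      rw [Nat.cast_sub hle.le, hcast, sub_self]
    exact (ZMod.natCast_eq_zero_iff _ _).1 this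
  obtain ⟨b, hb⟩ := hdvd
  have hbgt : m (k - 1) < b := by
    have h1 : q k * m (k - 1) < q k * b := by omega
    exact Nat.lt_of_mul_lt_mul_left h1
  have h1 : q k * b ∈ AddSubmonoid.closure (gensH p q k) :=
    mul_mem_cl p q k (by omega) b (ih b hbgt)
  have h2 : c * p k ∈ AddSubmonoid.closure (gensH p q k) := by
    have := AddSubmonoid.subset_closure (pk_mem p q k (by omega))
    simpa [nsmul_eq_mul] using AddSubmonoid.nsmul_mem (AddSubmonoid.closure (gensH p q k)) this c
  have : a = q k * b + c * p k := by omega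
  rw [this]
  exact AddSubmonoid.add_mem _ h1 h2
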